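/- In Scenario A (challenges sampled without replacement within a challenge), for every k ≥ 1 and every i with m ≤ i ≤ n, the probability that exactly i distinct password positions are known after k challenge–response pairs satisfies the recurrence p_k(X = i) = (1 / C(n,m)) · Σ_{j=0}^{m} C(i−j, m−j) · C(n−(i−j), j) · p_{k−1}(X = i−j). -/

import Mathlib

/-- Scenario A: `k` i.i.d. challenges, each uniform over the `C(n,m)` subsets of
cardinality `m` of the `n`-element set of password positions (`Fin n`).
`pA n m k i` is the probability that the union of the `k` challenges has exactly
`i` elements, computed as a ratio of counts over the uniform finite sample space. -/
noncomputable def pA (n m k i : ℕ) : ℝ :=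
  ((Finset.univ.filter fun f : Fin k → {S : Finset (Fin n) // S.card = m} =>
      (Finset.univ.biUnion fun t => (f t).1).card = i).card : ℝ) /
    (Fintype.card (Fin k → {S : Finset (Fin n) // S.card = m}) : ℝ)

open Finset

namespace ScenarioAAux

def NN (n m k i : ℕ) : ℕ :=
  (Finset.univ.filter fun f : Fin k → {S : Finset (Fin n) // S.card = m} =>
      (Finset.univ.biUnion fun t => (f t).1).card = i).card

def cf (n m i t : ℕ) : ℕ :=
  if t ≤ i ∧ i ≤ t + m then t.choose (m - (i - t)) * (n - t).choose (i - t) else 0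

lemma count_pos (n m i t : ℕ) (T : Finset (Fin n)) (hT : T.card = t)
    (ht1 : t ≤ i) (ht2 : i ≤ t + m) :
    (univ.filter fun S : {S : Finset (Fin n) // S.card = m} => (S.1 ∪ T).card = i).card
      = t.choose (m - (i - t)) * (n - t).choose (i - t) := by
  subst hT
  have hTc : Tᶜ.card = n - T.card := by
    rw [Finset.card_compl, Fintype.card_fin]
  rw [← hTc, ← Finset.card_powersetCard, ← Finset.card_powersetCard,
    ← Finset.card_product]
  refine Finset.card_bij' (fun S _ => (S.1 ∩ T, S.1 \ T))
      (fun p hp => ⟨p.1 ∪ p.2, ?_⟩) ?_ ?_ ?_ ?_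
  · simp only [Finset.mem_product, Finset.mem_powersetCard] at hp
    obtain ⟨⟨hA, hAc⟩, hB, hBc⟩ := hp
    have hdisj : Disjoint p.1 p.2 := Finset.disjoint_left.2 fun x hx hx' =>
      absurd (hA hx) (Finset.mem_compl.1 (hB hx'))
    rw [Finset.card_union_of_disjoint hdisj, hAc, hBc]
    omega
  · intro S hS
    simp only [Finset.mem_filter, Finset.mem_univ, true_and] at hS
    have hcard := S.2
    have h1 := Finset.card_union_add_card_inter S.1 T
    have h2 := Finset.card_sdiff_add_card_inter S.1 T
    simp only [Finset.mem_product, Finset.mem_powersetCard]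
    exact ⟨⟨Finset.inter_subset_right, by omega⟩,
      fun x hx => Finset.mem_compl.2 (Finset.mem_sdiff.1 hx).2, by omega⟩
  · intro p hp
    simp only [Finset.mem_product, Finset.mem_powersetCard] at hp
    obtain ⟨⟨hA, hAc⟩, hB, hBc⟩ := hp
    have hBT : Disjoint T p.2 := Finset.disjoint_left.2 fun x hx hx' =>
      absurd hx (Finset.mem_compl.1 (hB hx'))
    simp only [Finset.mem_filter, Finset.mem_univ, true_and]
    have hu : p.1 ∪ p.2 ∪ T = T ∪ p.2 := by
      rw [Finset.union_right_comm, Finset.union_eq_right.2 hA]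
    rw [hu, Finset.card_union_of_disjoint hBT, hBc]
    omega
  · intro S hS
    apply Subtype.ext
    simp only
    ext x
    simp only [Finset.mem_union, Finset.mem_inter, Finset.mem_sdiff]
    tauto
  · intro p hp
    simp only [Finset.mem_product, Finset.mem_powersetCard] at hp
    obtain ⟨⟨hA, _⟩, hB, _⟩ := hp
    have hBT : Disjoint p.2 T := Finset.disjoint_left.2 fun x hx hx' =>
      absurd hx' (Finset.mem_compl.1 (hB hx))
    have e1 : (p.1 ∪ p.2) ∩ T = p.1 := by
      rw [Finset.union_inter_distrib_right, Finset.inter_eq_left.2 hA,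
        (Finset.disjoint_iff_inter_eq_empty.1 hBT), Finset.union_empty]
    have e2 : (p.1 ∪ p.2) \ T = p.2 := by
      rw [Finset.union_sdiff_distrib, Finset.sdiff_eq_empty_iff_subset.2 hA,
        Finset.empty_union, Finset.sdiff_eq_self_of_disjoint hBT]
    simp only [e1, e2]

lemma count_eq (n m i : ℕ) (T : Finset (Fin n)) :
    (univ.filter fun S : {S : Finset (Fin n) // S.card = m} => (S.1 ∪ T).card = i).card
      = cf n m i T.card := by
  unfold cf
  split
  · exact count_pos n m i T.card T rfl (by tauto) (by tauto)
  · next h =>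
    rw [Finset.card_eq_zero, Finset.filter_eq_empty_iff]
    intro S _
    have h1 : T.card ≤ (S.1 ∪ T).card := card_le_card subset_union_right
    have h2 : (S.1 ∪ T).card ≤ S.1.card + T.card := card_union_le _ _
    have hS := S.2
    omega

lemma reindex (n m k i : ℕ) (hmi : m ≤ i) (hin : i ≤ n) :
    ∑ t ∈ range (n+1), cf n m i t * NN n m k t
      = ∑ j ∈ range (m+1),
        (i - j).choose (m - j) * ((n - (i - j)).choose j) * NN n m k (i - j) := by
  have himg : (range (m+1)).image (fun j => i - j) ⊆ range (n+1) := by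
    intro t ht
    simp only [Finset.mem_image, Finset.mem_range] at ht ⊢
    omega
  rw [← Finset.sum_subset himg (fun t _ hnot => ?_),
    Finset.sum_image (fun a ha b hb hab => ?_)]
  · refine Finset.sum_congr rfl fun j hj => ?_
    simp only [Finset.mem_range] at hj
    unfold cf
    rw [if_pos ⟨by omega, by omega⟩]
    have e1 : i - (i - j) = j := by omega
    rw [e1]
  · simp only [Finset.mem_coe, Finset.mem_range] at ha hb
    omega
  · have hcf : cf n m i t = 0 := by
      unfold cf
      split
      · next h =>
        refine absurd (Finset.mem_image.2 ⟨i - t, Finset.mem_range.2 (by omega), ?_⟩) hnot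
        show i - (i - t) = t
        omega
      · rfl
    rw [hcf, zero_mul]

lemma N_rec (n m k i : ℕ) (hm : 1 ≤ m) (hmn : m ≤ n) (hmi : m ≤ i) (hin : i ≤ n) :
    NN n m (k+1) i = ∑ j ∈ range (m+1),
      (i - j).choose (m - j) * ((n - (i - j)).choose j) * NN n m k (i - j) := by
  classical
  -- Step 1: split off the first challenge
  have h1 : NN n m (k+1) i =
      (univ.filter fun p : {S : Finset (Fin n) // S.card = m} × (Fin k → {S : Finset (Fin n) // S.card = m}) =>
        ((p.1 : Finset (Fin n)) ∪ univ.biUnion fun t => (p.2 t).1).card = i).card := by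
    unfold NN
    refine (Finset.card_equiv (Fin.consEquiv fun _ => {S : Finset (Fin n) // S.card = m}) ?_).symm
    intro p
    simp only [Finset.mem_filter, Finset.mem_univ, true_and, Fin.consEquiv_apply]
    have : (univ.biUnion fun t : Fin (k+1) => ((Fin.cons p.1 p.2 : Fin (k+1) → {S : Finset (Fin n) // S.card = m}) t).1)
        = (p.1 : Finset (Fin n)) ∪ univ.biUnion fun t => (p.2 t).1 := by
      ext x
      simp only [Finset.mem_biUnion, Finset.mem_univ, true_and, Finset.mem_union,
        Fin.exists_fin_succ, Fin.cons_zero, Fin.cons_succ]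
    rw [this]
  -- Step 2: sum over the remaining challenges
  have h2 : (univ.filter fun p : {S : Finset (Fin n) // S.card = m} × (Fin k → {S : Finset (Fin n) // S.card = m}) =>
        ((p.1 : Finset (Fin n)) ∪ univ.biUnion fun t => (p.2 t).1).card = i).card
      = ∑ g : Fin k → {S : Finset (Fin n) // S.card = m}, cf n m i (univ.biUnion fun t => (g t).1).card := by
    rw [Finset.card_filter, Fintype.sum_prod_type, Finset.sum_comm]
    refine Finset.sum_congr rfl fun g _ => ?_
    rw [← count_eq n m i (univ.biUnion fun t => (g t).1), Finset.card_filter]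
  -- Step 3: group by union size
  have h3 : ∑ g : Fin k → {S : Finset (Fin n) // S.card = m}, cf n m i (univ.biUnion fun t => (g t).1).card
      = ∑ t ∈ range (n+1), cf n m i t * NN n m k t := by
    rw [← Finset.sum_fiberwise_of_maps_to (g := fun g : Fin k → {S : Finset (Fin n) // S.card = m} =>
      (univ.biUnion fun t => (g t).1).card) (t := range (n+1))
      (fun g _ => Finset.mem_range.2 (Nat.lt_succ_of_le
        (le_trans (Finset.card_le_univ _) (by simp [Fintype.card_fin]))))]
    refine Finset.sum_congr rfl fun t _ => ?_
    rw [Finset.sum_congr rfl (fun g hg => by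
      rw [(Finset.mem_filter.1 hg).2]), Finset.sum_const, smul_eq_mul, mul_comm]
    rfl
  rw [h1, h2, h3, reindex n m k i hmi hin]

lemma pA_eq (n m k i : ℕ) :
    pA n m k i = (NN n m k i : ℝ) / ((n.choose m : ℝ))^k := by
  unfold pA NN
  congr 1
  rw [Fintype.card_fun, Fintype.card_finset_len, Fintype.card_fin, Fintype.card_fin]
  push_cast
  ring

end ScenarioAAux

/-- Scenario A recurrence: for `1 ≤ m ≤ n`, `k ≥ 1` and `m ≤ i ≤ n`,
`p_k(X = i) = (1 / C(n,m)) · Σ_{j=0}^{m} C(i-j, m-j) · C(n-(i-j), j) · p_{k-1}(X = i-j)`. -/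
theorem scenarioA_recurrence (n m : ℕ) (hm : 1 ≤ m) (hmn : m ≤ n)
    (k : ℕ) (hk : 1 ≤ k) (i : ℕ) (hmi : m ≤ i) (hin : i ≤ n) :
    pA n m k i =
      (1 / (n.choose m : ℝ)) *
        ∑ j ∈ Finset.range (m + 1),
          ((i - j).choose (m - j) : ℝ) * ((n - (i - j)).choose j : ℝ) *
            pA n m (k - 1) (i - j) := by
  obtain ⟨k', rfl⟩ : ∃ k', k = k' + 1 := ⟨k - 1, by omega⟩
  have hC : (0:ℝ) < (n.choose m : ℝ) := by exact_mod_cast Nat.choose_pos hmn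
  have hC' : (n.choose m : ℝ) ≠ 0 := ne_of_gt hC
  have hN := ScenarioAAux.N_rec n m k' i hm hmn hmi hin
  simp only [Nat.add_sub_cancel]
  rw [ScenarioAAux.pA_eq, hN]
  push_cast
  rw [Finset.sum_div, Finset.mul_sum]
  refine Finset.sum_congr rfl fun j hj => ?_
  rw [ScenarioAAux.pA_eq, pow_succ]
  field_simp
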